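/- For all real parameters λ > 0 with λ ≠ 1 and φ > 0, and every t > 0, the lower partial first moment of the SMPtW distribution satisfies ∫₀^t y · f(y) dy = ((log λ)/(λ − 1)) · Σ_{j=0}^∞ ( (log λ)^j / (j! · (j + 1)^(1 + 1/φ)) ) · ∫₀^{(j+1)·t^φ} v^(1/φ) · exp(−v) dv, where f is the SMPtW density. -/

import Mathlib

open Real MeasureTheory Set

lemma subst_lemma (phi t c : ℝ) (hphi : 0 < phi) (ht : 0 < t) (hc : 0 < c) :
    ∫ y in (0:ℝ)..t, phi * y ^ phi * Real.exp (-(c * y ^ phi)) =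
      (1 / c ^ (1 + 1/phi)) * ∫ v in (0:ℝ)..(c * t ^ phi), v ^ (1/phi) * Real.exp (-v) := by
  have hcpow : (0:ℝ) < c ^ (1 + 1/phi) := Real.rpow_pos_of_pos hc _
  set g : ℝ → ℝ := fun v => (1 / c ^ (1 + 1/phi)) * (v ^ (1/phi) * Real.exp (-v)) with hg
  have hgc : Continuous g := by
    apply Continuous.mul continuous_const
    apply Continuous.mul
    · exact continuous_iff_continuousAt.2 fun x =>
        Real.continuousAt_rpow_const x (1/phi) (Or.inr (by positivity))
    · exact (Real.continuous_exp.comp continuous_neg)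
  set f : ℝ → ℝ := fun y => c * y ^ phi with hfdef
  set f' : ℝ → ℝ := fun y => c * phi * y ^ (phi - 1) with hf'def
  have hfc : Continuous f := by
    apply Continuous.mul continuous_const
    exact continuous_iff_continuousAt.2 fun x =>
      Real.continuousAt_rpow_const x phi (Or.inr hphi.le)
  -- key pointwise identity
  have key : ∀ x ∈ uIcc (0:ℝ) t, f' x * g (f x) = phi * x ^ phi * Real.exp (-(c * x ^ phi)) := by
    intro x hx
    rw [uIcc_of_le ht.le] at hx
    rcases eq_or_lt_of_le hx.1 with h0 | h0
    · simp only [hfdef, hf'def, hg, ← h0]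
      rcases eq_or_ne phi 1 with h1 | h1
      · simp [h1]
      · rw [Real.zero_rpow (by intro h; apply h1; linarith [sub_eq_zero.mp h] : phi - 1 ≠ 0),
          Real.zero_rpow hphi.ne']
        simp
    · have hx0 : (0:ℝ) < x := h0
      simp only [hfdef, hf'def, hg]
      have h1 : (c * x ^ phi) ^ (1/phi) = c ^ (1/phi) * x := by
        rw [Real.mul_rpow hc.le (Real.rpow_nonneg hx0.le _), ← Real.rpow_mul hx0.le,
          mul_one_div, div_self hphi.ne', Real.rpow_one]
      rw [h1]
      have h2 : x ^ (phi - 1) * x = x ^ phi := by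
        rw [← Real.rpow_add_one hx0.ne']; norm_num
      have h3 : c * c ^ (1/phi) = c ^ (1 + 1/phi) := by
        rw [Real.rpow_add hc, Real.rpow_one]
      have expand : c * phi * x ^ (phi - 1) *
          (1 / c ^ (1 + 1/phi) * (c ^ (1/phi) * x * Real.exp (-(c * x ^ phi)))) =
          (c * c ^ (1/phi)) / c ^ (1 + 1/phi) *
            (phi * (x ^ (phi - 1) * x) * Real.exp (-(c * x ^ phi))) := by ring
      rw [expand, h2, h3, div_self hcpow.ne', one_mul]
  have himg : f '' uIcc (0:ℝ) t ⊆ Ici (0:ℝ) := by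
    rintro _ ⟨x, hx, rfl⟩
    exact mul_nonneg hc.le (Real.rpow_nonneg (by rw [uIcc_of_le ht.le] at hx; exact hx.1) _)
  have hsub := intervalIntegral.integral_comp_smul_deriv''' (a := 0) (b := t)
    (f := f) (f' := f') (g := g) (hfc.continuousOn)
    (by
      intro x hx
      rw [min_eq_left ht.le, max_eq_right ht.le] at hx
      have : HasDerivAt f (c * (phi * x ^ (phi - 1))) x :=
        (Real.hasDerivAt_rpow_const (Or.inl hx.1.ne')).const_mul c
      exact (this.hasDerivWithinAt).congr_deriv (by ring))
    (hgc.continuousOn)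
    (hgc.continuousOn.integrableOn_compact (isCompact_uIcc.image_of_continuousOn hfc.continuousOn) |>.mono_set (subset_refl _))
    (by
      have hcont : Continuous fun x : ℝ => phi * x ^ phi * Real.exp (-(c * x ^ phi)) :=
        Continuous.mul (Continuous.mul continuous_const
          (continuous_iff_continuousAt.2 fun x =>
            Real.continuousAt_rpow_const x phi (Or.inr hphi.le)))
          (Real.continuous_exp.comp (hfc.neg))
      refine (hcont.continuousOn.integrableOn_compact isCompact_uIcc).congr_fun ?_ measurableSet_uIcc
      intro x hx
      exact (key x hx).symm)
  simp only [smul_eq_mul, Function.comp] at hsub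
  rw [intervalIntegral.integral_congr key] at hsub
  rw [hsub]
  have hf0 : f 0 = 0 := by simp [hfdef, Real.zero_rpow hphi.ne']
  rw [hf0, hg]
  rw [← intervalIntegral.integral_const_mul]


/-- The SMPtW probability density function with parameters `lam > 0`, `lam ≠ 1`, `phi > 0`. -/
noncomputable def smptwPDF (lam phi y : ℝ) : ℝ :=
  (Real.log lam * phi * y ^ (phi - 1) *
    Real.exp (Real.log lam * Real.exp (-(y ^ phi)) - y ^ phi)) / (lam - 1)

/-- the lower partial first moment of the SMPtW distribution
(appearing in the mean waiting time). -/
theorem smptw_lower_partial_moment (lam phi : ℝ)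
    (hlam : 0 < lam) (hlam1 : lam ≠ 1) (hphi : 0 < phi)
    (t : ℝ) (ht : 0 < t) :
    ∫ y in (0 : ℝ)..t, y * smptwPDF lam phi y =
      (Real.log lam / (lam - 1)) *
        ∑' j : ℕ,
          ((Real.log lam) ^ j /
              ((j.factorial : ℝ) * ((j : ℝ) + 1) ^ (1 + 1 / phi))) *
            ∫ v in (0 : ℝ)..(((j : ℝ) + 1) * t ^ phi),
              v ^ (1 / phi) * Real.exp (-v) := by

  set L := Real.log lam with hL
  set F : ℕ → ℝ → ℝ := fun j y =>
    (L / (lam - 1)) * (L ^ j / (j.factorial : ℝ) *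
      (phi * y ^ phi * Real.exp (-(((j : ℝ) + 1) * y ^ phi)))) with hF
  have hμ : ∀ j : ℕ, (0:ℝ) < (j : ℝ) + 1 := fun j => by positivity
  -- continuity of base functions
  have hrpow_cont : Continuous fun y : ℝ => y ^ phi :=
    continuous_iff_continuousAt.2 fun x =>
      Real.continuousAt_rpow_const x phi (Or.inr hphi.le)
  have hFcont : ∀ j : ℕ, Continuous (F j) := by
    intro j
    apply Continuous.mul continuous_const
    apply Continuous.mul continuous_const
    exact ((continuous_const.mul hrpow_cont).mul
      (Real.continuous_exp.comp (continuous_const.mul hrpow_cont).neg))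
  -- pointwise HasSum for y > 0
  have hptwise : ∀ y : ℝ, 0 < y →
      HasSum (fun j => F j y) (y * smptwPDF lam phi y) := by
    intro y hy
    set C := phi * y ^ phi * Real.exp (-(y ^ phi)) * (L / (lam - 1)) with hC
    have base : HasSum (fun j : ℕ => (L * Real.exp (-(y ^ phi))) ^ j / (j.factorial : ℝ))
        (Real.exp (L * Real.exp (-(y ^ phi)))) := by
      rw [Real.exp_eq_exp_ℝ]
      exact NormedSpace.expSeries_div_hasSum_exp _
    have hmul : HasSum (fun i : ℕ => (L * Real.exp (-(y ^ phi))) ^ i / (i.factorial : ℝ) * C)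
        (Real.exp (L * Real.exp (-(y ^ phi))) * C) := base.mul_right C
    convert hmul using 1
    · funext j
      rw [hF, hC]
      simp only
      rw [mul_pow, ← Real.exp_nat_mul,
        show ((j:ℝ)) * -(y ^ phi) = -((j:ℝ) * y ^ phi) by ring,
        show -(((j:ℝ) + 1) * y ^ phi) = -((j:ℝ) * y ^ phi) + -(y ^ phi) by ring,
        Real.exp_add]
      ring
    · show y * smptwPDF lam phi y = _
      have hyy : y * y ^ (phi - 1) = y ^ phi := by
        rw [mul_comm, ← Real.rpow_add_one hy.ne']; norm_num
      have hE : Real.exp (Real.log lam * Real.exp (-(y ^ phi)) - y ^ phi) =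
          Real.exp (Real.log lam * Real.exp (-(y ^ phi))) * Real.exp (-(y ^ phi)) := by
        rw [← Real.exp_add]; ring_nf
      rw [smptwPDF, hE]
      simp only [hC, ← hL]
      linear_combination (L * phi * Real.exp (L * Real.exp (-(y ^ phi))) *
        Real.exp (-(y ^ phi)) / (lam - 1)) * hyy
  -- the HasSum of integrals
  have hbound_sum : Summable fun j : ℕ => |L| ^ j / (j.factorial : ℝ) :=
    Real.summable_pow_div_factorial _
  have key : HasSum (fun j => ∫ y in Set.Ioc (0:ℝ) t, F j y)
      (∫ y in Set.Ioc (0:ℝ) t, y * smptwPDF lam phi y) := by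
    apply MeasureTheory.hasSum_integral_of_dominated_convergence
      (bound := fun j y => |L / (lam - 1)| * (|L| ^ j / (j.factorial : ℝ)) * (phi * y ^ phi))
    · exact fun j => ((hFcont j).aestronglyMeasurable).restrict
    · intro j
      rw [MeasureTheory.ae_restrict_iff' measurableSet_Ioc]
      filter_upwards with y hy
      rw [hF]
      simp only
      have h1 : (0:ℝ) ≤ y ^ phi := Real.rpow_nonneg hy.1.le _
      have hexple : Real.exp (-(((j : ℝ) + 1) * y ^ phi)) ≤ 1 := by
        apply Real.exp_le_one_iff.2
        have := mul_nonneg (hμ j).le h1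
        linarith
      have h2 : |L ^ j / (j.factorial:ℝ)| = |L| ^ j / (j.factorial:ℝ) := by
        rw [abs_div, abs_pow, Nat.abs_cast]
      have h3 : |phi * y ^ phi * Real.exp (-(((j : ℝ) + 1) * y ^ phi))| =
          phi * y ^ phi * Real.exp (-(((j : ℝ) + 1) * y ^ phi)) :=
        abs_of_nonneg (by positivity)
      rw [Real.norm_eq_abs, abs_mul, abs_mul, h2, h3]
      have hyp : (0:ℝ) ≤ phi * y ^ phi := mul_nonneg hphi.le h1
      have hb : |L| ^ j / (j.factorial:ℝ) * (phi * y ^ phi * Real.exp (-(((j : ℝ) + 1) * y ^ phi)))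
          ≤ |L| ^ j / (j.factorial:ℝ) * (phi * y ^ phi) :=
        mul_le_mul_of_nonneg_left (mul_le_of_le_one_right hyp hexple) (by positivity)
      calc |L / (lam - 1)| *
            (|L| ^ j / (j.factorial:ℝ) * (phi * y ^ phi * Real.exp (-(((j : ℝ) + 1) * y ^ phi))))
          ≤ |L / (lam - 1)| * (|L| ^ j / (j.factorial:ℝ) * (phi * y ^ phi)) :=
            mul_le_mul_of_nonneg_left hb (abs_nonneg _)
        _ = |L / (lam - 1)| * (|L| ^ j / (j.factorial:ℝ)) * (phi * y ^ phi) := by ring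
    · filter_upwards with y
      exact ((hbound_sum.mul_left _).mul_right _)
    · have htsum : (fun y : ℝ => ∑' j : ℕ,
          (|L / (lam - 1)| * (|L| ^ j / (j.factorial:ℝ)) * (phi * y ^ phi))) =
          fun y : ℝ => |L / (lam - 1)| * Real.exp |L| * (phi * y ^ phi) := by
        funext y
        rw [tsum_mul_right, tsum_mul_left]
        congr 2
        rw [Real.exp_eq_exp_ℝ, NormedSpace.exp_eq_tsum_div]
      rw [htsum]
      exact (continuous_const.mul (continuous_const.mul hrpow_cont)).integrableOn_Ioc
    · rw [MeasureTheory.ae_restrict_iff' measurableSet_Ioc]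
      filter_upwards with y hy
      exact hptwise y hy.1
  -- assemble
  rw [intervalIntegral.integral_of_le ht.le, ← key.tsum_eq, ← tsum_mul_left]
  apply tsum_congr
  intro j
  have hterm : ∀ y : ℝ, F j y = ((L / (lam - 1)) * (L ^ j / (j.factorial:ℝ))) *
      (phi * y ^ phi * Real.exp (-(((j:ℝ) + 1) * y ^ phi))) := by
    intro y; rw [hF]; ring
  simp only [hterm]
  rw [MeasureTheory.integral_const_mul,
    show (∫ y in Set.Ioc (0:ℝ) t, phi * y ^ phi * Real.exp (-(((j:ℝ) + 1) * y ^ phi))) =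
      ∫ y in (0:ℝ)..t, phi * y ^ phi * Real.exp (-(((j:ℝ) + 1) * y ^ phi)) from
      (intervalIntegral.integral_of_le ht.le).symm,
    subst_lemma phi t ((j:ℝ) + 1) hphi ht (hμ j)]
  ring
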